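/- arXiv:math/0204052 — 2 statements merged into one kernel-verified Lean document; each statement's English description precedes it below -/
import Mathlib

section
/- Let S be a commutative monoid, A_j = {a_{1,j},...,a_{k_j,j}} ⊆ S for j = 1,...,r, k = Σ k_j, and f : ℕ^k → S the homomorphism f(x) = Σ_j Σ_i x_{i,j} a_{i,j}. Call x ∈ ℕ^k r-useless if there exists u with the same r-height as x (the same block-wise coordinate sums), f(u) = f(x), and u <_lex x. Then the set of r-useless points is an ideal of ℕ^k: it is closed under addition of arbitrary elements of ℕ^k. -/
/-- x <_lex y on ℕ^{k₁} × ⋯ × ℕ^{k_r}, with blocks concatenated in order: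
x and y agree on all coordinates preceding the coordinate (j,i), where x j i < y j i. -/
def lexLtBlocks {r : ℕ} {k : Fin r → ℕ} (x y : ∀ j : Fin r, Fin (k j) → ℕ) : Prop :=
  ∃ j : Fin r, ∃ i : Fin (k j),
    (∀ j' < j, x j' = y j') ∧ (∀ i' < i, x j i' = y j i') ∧ x j i < y j i

theorem stmt_13 {S : Type*} [AddCommMonoid S] (r : ℕ) (k : Fin r → ℕ)
    (a : ∀ j : Fin r, Fin (k j) → S)
    (f : (∀ j : Fin r, Fin (k j) → ℕ) → S)
    (hf : ∀ x, f x = ∑ j, ∑ i, x j i • a j i)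
    (useless : (∀ j : Fin r, Fin (k j) → ℕ) → Prop)
    (huseless : ∀ x, useless x ↔
      ∃ u, (∀ j, ∑ i, u j i = ∑ i, x j i) ∧ f u = f x ∧ lexLtBlocks u x) :
    ∀ x t, useless x → useless (x + t) := by
  intro x t hx
  rw [huseless] at hx ⊢
  obtain ⟨u, hsum, hfu, j, i, hj, hi, hlt⟩ := hx
  refine ⟨u + t, ?_, ?_, j, i, ?_, ?_, ?_⟩
  · intro j'
    simp only [Pi.add_apply, Finset.sum_add_distrib, hsum]
  · rw [hf, hf]
    simp only [Pi.add_apply, add_smul, Finset.sum_add_distrib]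
    rw [hf] at hfu
    rw [hfu, hf x]
  · intro j' hj'; funext i'; simp [hj j' hj']
  · intro i' hi'; simp [hi i' hi']
  · simpa using hlt
end

section
/- If A is a finite nonempty subset of ℕ (the nonnegative integers), then there exist integers c, d and h_0 such that |hA| = c·h + d for all h ≥ h_0; that is, the cardinality of the h-fold sumset of a finite set of nonnegative integers is eventually a linear function of h. -/
open Pointwise

namespace Kh

lemma zero_smul' (A : Finset ℕ) : (0:ℕ) • A = {0} := rfl
lemma succ_smul' (A : Finset ℕ) (h : ℕ) : (h+1) • A = h • A + A := rfl

lemma add_smul' (A : Finset ℕ) (k l : ℕ) : (k + l) • A = k • A + l • A := by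
  induction l with
  | zero =>
      simp only [Nat.add_zero, zero_smul']
      ext x
      simp [Finset.mem_add]
  | succ n ih =>
      rw [show k + (n+1) = (k+n)+1 by ring, succ_smul', ih, succ_smul', add_assoc]

lemma smul_mono (A B : Finset ℕ) (k : ℕ) (h : A ⊆ B) : k • A ⊆ k • B := by
  induction k with
  | zero => simp [zero_smul']
  | succ n ih => rw [succ_smul', succ_smul']; exact Finset.add_subset_add ih h

lemma mem_smul_add {A : Finset ℕ} {k l x y : ℕ} (hx : x ∈ k • A) (hy : y ∈ l • A) :
    x + y ∈ (k + l) • A := by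
  rw [add_smul']; exact Finset.add_mem_add hx hy

lemma one_smul' (A : Finset ℕ) : (1:ℕ) • A = {0} + A := rfl

lemma mem_one_smul {A : Finset ℕ} {a : ℕ} (ha : a ∈ A) : a ∈ (1:ℕ) • A := by
  rw [one_smul']
  exact Finset.mem_add.2 ⟨0, by simp, a, ha, by ring⟩

lemma mul_mem_smul {A : Finset ℕ} {a : ℕ} (ha : a ∈ A) (q : ℕ) : q * a ∈ q • A := by
  induction q with
  | zero => simp [zero_smul']
  | succ n ih =>
      rw [succ_smul']
      have : (n+1) * a = n * a + a := by ring
      rw [this]; exact Finset.add_mem_add ih ha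

/-- scaling a representable element -/
lemma smul_rep {A : Finset ℕ} {u k : ℕ} (hu : u ∈ k • A) (y : ℕ) : y * u ∈ (y * k) • A := by
  induction y with
  | zero => simp [zero_smul']
  | succ n ih =>
      have h1 : (n+1) * u = n * u + u := by ring
      have h2 : (n+1) * k = n * k + k := by ring
      rw [h1, h2]; exact mem_smul_add ih hu


/-- Bezout within the additive span: there are representable u, v with u = v + gcd. -/
lemma bezout (s : Finset ℕ) : ∃ u v ku kv : ℕ,
    u ∈ ku • s ∧ v ∈ kv • s ∧ u = v + s.gcd id := by
  induction s using Finset.induction_on with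
  | empty => exact ⟨0, 0, 0, 0, by simp [zero_smul'], by simp [zero_smul'], by simp⟩
  | @insert a s ha ih =>
      obtain ⟨u, v, ku, kv, hu, hv, huv⟩ := ih
      set g := s.gcd id with hg
      have hsub : ∀ k : ℕ, (k • s : Finset ℕ) ⊆ k • (insert a s) :=
        fun k => smul_mono _ _ _ (Finset.subset_insert a s)
      have hgi : (insert a s).gcd id = Nat.gcd a g := by
        rw [Finset.gcd_insert]; rfl
      rcases Nat.eq_zero_or_pos g with hg0 | hgpos
      · -- gcd a 0 = a
        refine ⟨a + v, v, 1 + kv, kv, ?_, hsub _ hv, ?_⟩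
        · exact mem_smul_add (mem_one_smul (Finset.mem_insert_self a s)) (hsub _ hv)
        · rw [hgi, hg0, Nat.gcd_zero_right]; omega
      rcases Nat.eq_zero_or_pos a with ha0 | hapos
      · refine ⟨u, v, ku, kv, hsub _ hu, hsub _ hv, ?_⟩
        rw [hgi, ha0, Nat.gcd_zero_left]; exact huv
      -- both positive: use integer Bezout
      have hbez := Nat.gcd_eq_gcd_ab a g
      set X : ℤ := Nat.gcdA a g + (Nat.gcdA a g).natAbs * g with hX
      have hXnn : 0 ≤ X := by
        have habs : ((Nat.gcdA a g).natAbs : ℤ) = |Nat.gcdA a g| := (Int.abs_eq_natAbs _).symm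
        have hg1 : (1:ℤ) ≤ (g:ℤ) := by exact_mod_cast hgpos
        rw [hX, habs]
        rcases le_or_gt 0 (Nat.gcdA a g) with h | h
        · have : 0 ≤ |Nat.gcdA a g| * (g:ℤ) := by positivity
          linarith [abs_nonneg (Nat.gcdA a g)]
        · rw [abs_of_neg h]
          nlinarith
      set Z : ℤ := Nat.gcdB a g - (Nat.gcdA a g).natAbs * a with hZ
      have key : (Nat.gcd a g : ℤ) = a * X + g * Z := by
        rw [hX, hZ]; push_cast; linear_combination hbez
      set x : ℕ := X.toNat with hx
      set yp : ℕ := Z.toNat with hyp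
      set ym : ℕ := (-Z).toNat with hym
      have hxX : (x : ℤ) = X := Int.toNat_of_nonneg hXnn
      have hZd : (yp : ℤ) - ym = Z := by
        rcases le_or_gt 0 Z with h | h
        · rw [hyp, hym, Int.toNat_of_nonneg h]; simp [Int.toNat_of_nonpos (by omega : -Z ≤ 0)]
        · rw [hyp, hym, Int.toNat_of_nonpos h.le, Int.toNat_of_nonneg (by omega : 0 ≤ -Z)]; ring
      -- natural number key equation
      have keyN : Nat.gcd a g + g * ym = a * x + g * yp := by
        have : (Nat.gcd a g : ℤ) + g * ym = a * x + g * yp := by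
          rw [key, hxX]
          have : (g:ℤ) * yp - g * ym = g * Z := by rw [← hZd]; ring
          linarith [this]
        exact_mod_cast this
      -- memberships
      have hax : a * x ∈ x • (insert a s) := by
        have := mul_mem_smul (Finset.mem_insert_self a s) x
        rwa [Nat.mul_comm] at this
      have huyp : yp * u ∈ (yp * ku) • (insert a s) := hsub _ (smul_rep hu yp)
      have huym : ym * u ∈ (ym * ku) • (insert a s) := hsub _ (smul_rep hu ym)
      have hvyp : yp * v ∈ (yp * kv) • (insert a s) := hsub _ (smul_rep hv yp)
      have hvym : ym * v ∈ (ym * kv) • (insert a s) := hsub _ (smul_rep hv ym)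
      refine ⟨a * x + yp * u + ym * v, ym * u + yp * v, x + yp * ku + ym * kv,
        ym * ku + yp * kv, ?_, ?_, ?_⟩
      · exact mem_smul_add (mem_smul_add hax huyp) hvym
      · exact mem_smul_add huym hvyp
      · rw [hgi]
        have : yp * u = yp * v + yp * g := by rw [huv]; ring
        have h2 : ym * u = ym * v + ym * g := by rw [huv]; ring
        -- goal: a*x + yp*u + ym*v = ym*u + yp*v + gcd a g
        rw [this, h2]
        -- a*x + (yp*v + yp*g) + ym*v = (ym*v + ym*g) + yp*v + gcd
        have := keyN
        -- rearrange with products as atoms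
        zify at this ⊢
        linarith [this]

/-- every sufficiently large number is representable, when the gcd is 1 -/
lemma semigroup_lemma (A : Finset ℕ) (hgcd : A.gcd id = 1) :
    ∃ N : ℕ, ∀ n ≥ N, ∃ k : ℕ, n ∈ k • A := by
  obtain ⟨u, v, ku, kv, hu, hv, huv⟩ := bezout A
  rw [hgcd] at huv
  refine ⟨v * v, fun n hn => ?_⟩
  rcases Nat.eq_zero_or_pos v with hv0 | hvpos
  · -- v = 0, u = 1
    subst hv0
    have : n * u ∈ (n * ku) • A := smul_rep hu n
    rw [huv] at this
    exact ⟨n * ku, by simpa using this⟩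
  · have hq : n = n / v * v + n % v := by rw [Nat.div_add_mod' n v]
    set q := n / v with hqdef
    set r := n % v with hrdef
    have hrlt : r < v := Nat.mod_lt _ hvpos
    have hqge : v ≤ q := by
      rw [hqdef]
      exact Nat.le_div_iff_mul_le hvpos |>.2 (by nlinarith)
    have hrep : n = r * u + (q - r) * v := by
      rw [huv]; have : q - r + r = q := by omega
      nlinarith [this, hq, hrlt, hqge]
    have h1 : r * u ∈ (r * ku) • A := smul_rep hu r
    have h2 : (q - r) * v ∈ ((q - r) * kv) • A := smul_rep hv (q - r)
    exact ⟨r * ku + (q - r) * kv, by rw [hrep]; exact mem_smul_add h1 h2⟩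


/-- representation with at most n summands -/
lemma eff {A : Finset ℕ} (h0 : 0 ∈ A) :
    ∀ k n : ℕ, n ∈ k • A → ∃ k' ≤ n, n ∈ k' • A := by
  intro k
  induction k with
  | zero => intro n hn; rw [zero_smul'] at hn; simp at hn; exact ⟨0, by omega, by rw [hn, zero_smul']; simp⟩
  | succ m ih =>
      intro n hn
      rw [succ_smul', Finset.mem_add] at hn
      obtain ⟨y, hy, a, haA, hya⟩ := hn
      obtain ⟨k', hk', hyk⟩ := ih y hy
      rcases Nat.eq_zero_or_pos a with ha0 | hap
      · exact ⟨k', by omega, by rw [← hya, ha0, Nat.add_zero]; exact hyk⟩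
      · refine ⟨k' + 1, by omega, ?_⟩
        rw [succ_smul', ← hya]
        exact Finset.add_mem_add hyk haA

/-- smul monotone in the scalar when 0 ∈ A -/
lemma smul_mono_scalar {A : Finset ℕ} (h0 : 0 ∈ A) {k l : ℕ} (hkl : k ≤ l) :
    k • A ⊆ l • A := by
  obtain ⟨m, rfl⟩ := Nat.exists_eq_add_of_le hkl
  induction m with
  | zero => simp
  | succ n ih =>
      intro x hx
      have : x ∈ (k + n) • A := ih (by omega) hx
      rw [show k + (n+1) = (k+n)+1 by ring, succ_smul']
      have := Finset.add_mem_add this h0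
      simpa using this

lemma smul_le_bound {A : Finset ℕ} {b : ℕ} (hb : ∀ a ∈ A, a ≤ b) :
    ∀ h x, x ∈ h • A → x ≤ h * b := by
  intro h
  induction h with
  | zero => intro x hx; rw [zero_smul'] at hx; simp at hx; omega
  | succ m ih =>
      intro x hx
      rw [succ_smul', Finset.mem_add] at hx
      obtain ⟨y, hy, a, haA, hya⟩ := hx
      have := ih y hy
      have := hb a haA
      have : x = y + a := hya.symm
      nlinarith [ih y hy, hb a haA]

lemma reflect_mem {A : Finset ℕ} {b : ℕ} (hb : ∀ a ∈ A, a ≤ b) :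
    ∀ h x, x ∈ h • A → h * b - x ∈ h • (A.image (b - ·)) := by
  intro h
  induction h with
  | zero => intro x hx; rw [zero_smul'] at hx; simp at hx; subst hx; rw [zero_smul']; simp
  | succ m ih =>
      intro x hx
      rw [succ_smul', Finset.mem_add] at hx
      obtain ⟨y, hy, a, haA, hya⟩ := hx
      have h1 := ih y hy
      have h2 : b - a ∈ A.image (b - ·) := Finset.mem_image_of_mem _ haA
      have h3 := Finset.add_mem_add h1 h2
      rw [← succ_smul'] at h3
      have hyb := smul_le_bound hb m y hy
      have hab := hb a haA
      have : (m+1) * b - x = (m * b - y) + (b - a) := by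
        have : x = y + a := hya.symm
        subst this
        have : (m+1)*b = m*b + b := by ring
        omega
      rwa [this]

lemma reflect_invol {A : Finset ℕ} {b : ℕ} (hb : ∀ a ∈ A, a ≤ b) :
    (A.image (b - ·)).image (b - ·) = A := by
  ext x
  simp only [Finset.mem_image]
  constructor
  · rintro ⟨y, ⟨z, hz, rfl⟩, rfl⟩
    have := hb z hz
    have : b - (b - z) = z := by omega
    rwa [this]
  · intro hx
    exact ⟨b - x, ⟨x, hx, rfl⟩, by have := hb x hx; omega⟩

lemma reflect_gcd {A : Finset ℕ} {b : ℕ} (hbA : b ∈ A) (hb : ∀ a ∈ A, a ≤ b)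
    (h0 : 0 ∈ A) (hgcd : A.gcd id = 1) : (A.image (b - ·)).gcd id = 1 := by
  set g := (A.image (b - ·)).gcd id with hg
  have hdvd : ∀ a ∈ A, g ∣ b - a := by
    intro a ha
    exact Finset.gcd_dvd (Finset.mem_image_of_mem _ ha)
  have hgb : g ∣ b := by
    have := hdvd 0 h0
    simpa using this
  have : ∀ a ∈ A, g ∣ a := by
    intro a ha
    have h1 := hdvd a ha
    have h2 := hb a ha
    have : a = b - (b - a) := by omega
    rw [this]
    exact Nat.dvd_sub hgb h1
  have : g ∣ A.gcd id := Finset.dvd_gcd (by intro a ha; exact this a ha)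
  rw [hgcd] at this
  exact Nat.eq_one_of_dvd_one this

/-- a monotone sequence of finsets inside a fixed finite set stabilizes -/
lemma stabilize (f : ℕ → Finset ℕ) (C : ℕ)
    (hmono : ∀ h h', h ≤ h' → f h ⊆ f h') (hbdd : ∀ h, f h ⊆ Finset.range (C+1)) :
    ∃ h₁ : ℕ, ∀ h ≥ h₁, f h = f h₁ := by
  have hcard : ∀ h, (f h).card ≤ C + 1 := by
    intro h
    calc (f h).card ≤ (Finset.range (C+1)).card := Finset.card_le_card (hbdd h)
    _ = C + 1 := by simp
  set S : Set ℕ := Set.range (fun h => (f h).card) with hS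
  have hSne : S.Nonempty := ⟨(f 0).card, 0, rfl⟩
  have hSbdd : BddAbove S := ⟨C + 1, by rintro x ⟨h, rfl⟩; exact hcard h⟩
  obtain ⟨h₁, hh₁⟩ := Nat.sSup_mem hSne hSbdd
  refine ⟨h₁, fun h hh => ?_⟩
  have hsub : f h₁ ⊆ f h := hmono _ _ hh
  have hle : (f h).card ≤ (f h₁).card := by
    have : (f h₁).card = sSup S := hh₁
    rw [this]
    exact le_csSup hSbdd ⟨h, rfl⟩
  exact (Finset.eq_of_subset_of_card_le hsub hle).symm


/-- Main lemma: normalized case, 0 ∈ A and gcd A = 1. -/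
lemma main (A : Finset ℕ) (h0 : 0 ∈ A) (hgcd : A.gcd id = 1) :
    ∃ c d : ℤ, ∃ h₀ : ℕ, ∀ h ≥ h₀, ((h • A).card : ℤ) = c * h + d := by
  have hAne : A.Nonempty := ⟨0, h0⟩
  set b := A.max' hAne with hbdef
  have hbA : b ∈ A := A.max'_mem hAne
  have hb : ∀ a ∈ A, a ≤ b := fun a ha => A.le_max' a ha
  have hbpos : 1 ≤ b := by
    by_contra hcon
    push_neg at hcon
    interval_cases b
    · have : ∀ a ∈ A, a = 0 := fun a ha => by have := hb a ha; omega
      have : A.gcd id = 0 := Finset.gcd_eq_zero_iff.2 (fun a ha => this a ha)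
      omega
  set A' := A.image (b - ·) with hA'def
  have h0' : 0 ∈ A' := by
    rw [hA'def]
    exact Finset.mem_image.2 ⟨b, hbA, by omega⟩
  have hb' : ∀ a ∈ A', a ≤ b := by
    rintro a ha
    rw [hA'def, Finset.mem_image] at ha
    obtain ⟨x, hx, rfl⟩ := ha
    omega
  have hgcd' : A'.gcd id = 1 := reflect_gcd hbA hb h0 hgcd
  obtain ⟨N, hN⟩ := semigroup_lemma A hgcd
  set C := N + (N + b) * b with hCdef
  have hNC : N ≤ C := by rw [hCdef]; omega
  -- middle lemma
  have hmid : ∀ h n : ℕ, C < n → n + C < h * b → n ∈ h • A := by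
    intro h n hCn hnh
    have hnN : N ≤ n := by omega
    set q := (n - N) / b with hqdef
    have hqb : q * b ≤ n - N := Nat.div_mul_le_self _ _
    set m := n - q * b with hmdef
    have hmN : N ≤ m := by omega
    have hmlt : m < N + b := by
      have h1 := Nat.mod_lt (n - N) (show 0 < b by omega)
      have h2 := Nat.div_add_mod (n - N) b
      have h3 : q * b = b * ((n - N) / b) := by rw [hqdef]; ring
      omega
    obtain ⟨k0, hk0⟩ := hN m hmN
    obtain ⟨k, hkle, hk⟩ := eff h0 k0 m hk0
    have hqmem : q * b ∈ q • A := mul_mem_smul hbA q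
    have hmem : m + q * b ∈ (k + q) • A := mem_smul_add hk hqmem
    have hn' : n = m + q * b := by omega
    have hkq : k + q ≤ h := by
      have hP : k * b + b ≤ (N + b) * b := by nlinarith
      have hq2 : q * b + N ≤ n := by omega
      have hC2 : n + N + (N + b) * b < h * b := by
        rw [hCdef] at hnh; omega
      have hexp : (k + q) * b = k * b + q * b := by ring
      have hfin : (k + q) * b < h * b := by
        rw [hexp]; linarith
      have := Nat.lt_of_mul_lt_mul_right hfin
      omega
    have : n ∈ (k + q) • A := by rw [hn']; exact hmem
    exact smul_mono_scalar h0 hkq this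
  -- low end stabilization
  obtain ⟨h₁, hE⟩ := stabilize (fun h => (h • A).filter (· ≤ C)) C
    (fun h h' hhh => Finset.filter_subset_filter _ (smul_mono_scalar h0 hhh))
    (fun h => by
      intro x hx
      simp only [Finset.mem_filter] at hx
      exact Finset.mem_range.2 (by omega))
  set E := (h₁ • A).filter (· ≤ C) with hEdef
  -- high end stabilization (for reflected set)
  obtain ⟨h₂, hF⟩ := stabilize (fun h => (h • A').filter (· ≤ C)) C
    (fun h h' hhh => Finset.filter_subset_filter _ (smul_mono_scalar h0' hhh))
    (fun h => by
      intro x hx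
      simp only [Finset.mem_filter] at hx
      exact Finset.mem_range.2 (by omega))
  set F := (h₂ • A').filter (· ≤ C) with hFdef
  refine ⟨(b : ℤ), (E.card : ℤ) + F.card - (2 * C + 1), max (max h₁ h₂) (2 * C + 2), ?_⟩
  intro h hh
  have hh1 : h₁ ≤ h := by omega
  have hh2 : h₂ ≤ h := by omega
  have hhc : 2 * C + 2 ≤ h := le_trans (le_max_right _ _) hh
  have hhb : 2 * C + 2 ≤ h * b := by
    have : h ≤ h * b := Nat.le_mul_of_pos_right h (by omega)
    omega
  set S := h • A with hSdef
  have hcard1 : S.card = (S.filter (· ≤ C)).card + (S.filter (fun x => ¬ x ≤ C)).card :=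
    (Finset.card_filter_add_card_filter_not _).symm
  have hEh : S.filter (· ≤ C) = E := by
    rw [hSdef, hEdef]
    exact hE h hh1
  set T := S.filter (fun x => ¬ x ≤ C) with hTdef
  have hcard2 : T.card = (T.filter (fun x => x + C < h * b)).card +
      (T.filter (fun x => ¬ x + C < h * b)).card :=
    (Finset.card_filter_add_card_filter_not _).symm
  -- middle part is a full interval
  have hMid : T.filter (fun x => x + C < h * b) = Finset.Ioo C (h * b - C) := by
    ext x
    simp only [hTdef, Finset.mem_filter, Finset.mem_Ioo]
    constructor
    · rintro ⟨⟨hxS, hxC⟩, hxb⟩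
      omega
    · rintro ⟨hxC, hxb⟩
      refine ⟨⟨hmid h x hxC (by omega), by omega⟩, by omega⟩
  -- top part is in bijection with F
  have hTop : (T.filter (fun x => ¬ x + C < h * b)).card = F.card := by
    have hFh : F = (h • A').filter (· ≤ C) := (hF h hh2).symm
    rw [hFh]
    apply Finset.card_bij (fun x _ => h * b - x)
    · intro x hx
      simp only [hTdef, Finset.mem_filter] at hx ⊢
      obtain ⟨⟨hxS, hxC⟩, hxb⟩ := hx
      refine ⟨reflect_mem hb h x hxS, by omega⟩
    · intro x hx y hy hxy
      simp only [hTdef, Finset.mem_filter] at hx hy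
      have hx' := smul_le_bound hb h x hx.1.1
      have hy' := smul_le_bound hb h y hy.1.1
      omega
    · intro y hy
      simp only [hTdef, Finset.mem_filter] at hy ⊢
      obtain ⟨hyA', hyC⟩ := hy
      have h1 := reflect_mem hb' h y hyA'
      rw [reflect_invol hb] at h1
      have h2 := smul_le_bound hb' h y hyA'
      refine ⟨h * b - y, ⟨⟨h1, by omega⟩, by omega⟩, by omega⟩
  have hMidcard : (Finset.Ioo C (h * b - C)).card = h * b - C - C - 1 := Nat.card_Ioo _ _
  -- put it together
  have htotal : S.card = E.card + (h * b - C - C - 1) + F.card := by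
    rw [hcard1, hEh, hcard2, hMid, hMidcard, hTop]; omega
  rw [hSdef] at htotal
  have hcast : ((h • A).card : ℤ) = (E.card : ℤ) + ((h * b : ℕ) - 2 * (C : ℤ) - 1) + F.card := by
    rw [htotal]; push_cast; omega
  rw [hcast]
  have : ((h * b : ℕ) : ℤ) = (b : ℤ) * h := by push_cast; ring
  rw [this]; ring


lemma image_add_image (s t : Finset ℕ) (c d : ℕ) :
    s.image (· + c) + t.image (· + d) = (s + t).image (· + (c + d)) := by
  ext x
  simp only [Finset.mem_add, Finset.mem_image]
  constructor
  · rintro ⟨y, ⟨y', hy', rfl⟩, z, ⟨z', hz', rfl⟩, rfl⟩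
    exact ⟨y' + z', ⟨y', hy', z', hz', rfl⟩, by ring⟩
  · rintro ⟨w, ⟨y', hy', z', hz', rfl⟩, rfl⟩
    exact ⟨y' + c, ⟨y', hy', rfl⟩, z' + d, ⟨z', hz', rfl⟩, by ring⟩

lemma smul_image_add (B : Finset ℕ) (a h : ℕ) :
    h • (B.image (· + a)) = (h • B).image (· + h * a) := by
  induction h with
  | zero => rw [zero_smul', zero_smul']; simp
  | succ n ih =>
      rw [succ_smul', succ_smul', ih, image_add_image]
      have : n * a + a = (n+1) * a := by ring
      rw [this]

lemma image_mul_image (s t : Finset ℕ) (g : ℕ) :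
    s.image (· * g) + t.image (· * g) = (s + t).image (· * g) := by
  ext x
  simp only [Finset.mem_add, Finset.mem_image]
  constructor
  · rintro ⟨y, ⟨y', hy', rfl⟩, z, ⟨z', hz', rfl⟩, rfl⟩
    exact ⟨y' + z', ⟨y', hy', z', hz', rfl⟩, by ring⟩
  · rintro ⟨w, ⟨y', hy', z', hz', rfl⟩, rfl⟩
    exact ⟨y' * g, ⟨y', hy', rfl⟩, z' * g, ⟨z', hz', rfl⟩, by ring⟩

lemma smul_image_mul (B : Finset ℕ) (g h : ℕ) (hg : 1 ≤ g) :
    h • (B.image (· * g)) = (h • B).image (· * g) := by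
  induction h with
  | zero =>
      rw [zero_smul', zero_smul']
      ext x; simp
  | succ n ih =>
      rw [succ_smul', succ_smul', ih, image_mul_image]

lemma smul_singleton_zero (h : ℕ) : h • ({0} : Finset ℕ) = {0} := by
  induction h with
  | zero => rw [zero_smul']
  | succ n ih =>
      rw [succ_smul', ih]
      ext x; simp [Finset.mem_add]

end Kh

open Kh in
theorem stmt_19 (A : Finset ℕ) (hA : A.Nonempty) :
    ∃ c d : ℤ, ∃ h₀ : ℕ, ∀ h ≥ h₀, ((h • A).card : ℤ) = c * h + d := by
  classical
  set a := A.min' hA with hadef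
  set B := A.image (· - a) with hBdef
  have haA : a ∈ A := A.min'_mem hA
  have hale : ∀ x ∈ A, a ≤ x := fun x hx => A.min'_le x hx
  have hAB : A = B.image (· + a) := by
    ext x
    simp only [hBdef, Finset.mem_image]
    constructor
    · intro hx
      exact ⟨x - a, ⟨x, hx, rfl⟩, by have := hale x hx; omega⟩
    · rintro ⟨y, ⟨z, hz, rfl⟩, rfl⟩
      have := hale z hz
      have : z - a + a = z := by omega
      rwa [this]
  have h0B : 0 ∈ B := by
    rw [hBdef]
    exact Finset.mem_image.2 ⟨a, haA, by omega⟩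
  have hcardAB : ∀ h : ℕ, (h • A).card = (h • B).card := by
    intro h
    rw [hAB, smul_image_add]
    exact Finset.card_image_of_injective _ (add_left_injective _)
  set g := B.gcd id with hgdef
  rcases Nat.eq_zero_or_pos g with hg0 | hgpos
  · -- B = {0}
    have hB0 : B = {0} := by
      apply Finset.eq_singleton_iff_unique_mem.2
      refine ⟨h0B, fun x hx => ?_⟩
      have := Finset.gcd_eq_zero_iff.1 (hgdef ▸ hg0) x hx
      simpa using this
    refine ⟨0, 1, 0, fun h _ => ?_⟩
    rw [hcardAB h, hB0, smul_singleton_zero]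
    simp
  · set Cs := B.image (· / g) with hCsdef
    have hBCs : B = Cs.image (· * g) := by
      ext x
      simp only [hCsdef, Finset.mem_image]
      constructor
      · intro hx
        have hdvd : g ∣ x := Finset.gcd_dvd hx
        exact ⟨x / g, ⟨x, hx, rfl⟩, Nat.div_mul_cancel hdvd⟩
      · rintro ⟨y, ⟨z, hz, rfl⟩, rfl⟩
        have hdvd : g ∣ z := Finset.gcd_dvd hz
        have : z / g * g = z := Nat.div_mul_cancel hdvd
        rwa [this]
    have h0Cs : 0 ∈ Cs := Finset.mem_image.2 ⟨0, h0B, by simp⟩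
    have hgcdCs : Cs.gcd id = 1 := by
      set t := Cs.gcd id with htdef
      have hdvd : ∀ x ∈ B, g * t ∣ x := by
        intro x hx
        have h1 : g ∣ x := Finset.gcd_dvd hx
        have h2 : t ∣ x / g := Finset.gcd_dvd (Finset.mem_image.2 ⟨x, hx, rfl⟩)
        obtain ⟨w, hw⟩ := h2
        refine ⟨w, ?_⟩
        rw [mul_assoc, ← hw]
        exact (Nat.mul_div_cancel' h1).symm
      have : g * t ∣ g := by
        have h3 : g * t ∣ B.gcd id := Finset.dvd_gcd (fun x hx => hdvd x hx)
        rwa [← hgdef] at h3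
      have htd : t ∣ 1 := by
        rcases this with ⟨w, hw⟩
        have : g * (t * w) = g * 1 := by rw [← mul_assoc, ← hw]; ring
        have := Nat.eq_of_mul_eq_mul_left hgpos this
        exact ⟨w, this.symm⟩
      exact Nat.eq_one_of_dvd_one htd
    have hcardBCs : ∀ h : ℕ, (h • B).card = (h • Cs).card := by
      intro h
      rw [hBCs, smul_image_mul _ _ _ hgpos]
      exact Finset.card_image_of_injective _ (fun x y hxy => by
        simpa using Nat.eq_of_mul_eq_mul_right hgpos hxy)
    obtain ⟨c, d, h₀, hmain⟩ := main Cs h0Cs hgcdCs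
    refine ⟨c, d, h₀, fun h hh => ?_⟩
    rw [hcardAB h, hcardBCs h]
    exact hmain h hh
end
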